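/- Assume (q, n) is admissible and n > 1. Then the number of ordered pairs (x, y) of elements of AGL_1^{(n)}(q) such that x has order n, y has order 2, and x and y together generate AGL_1^{(n)}(q), is φ(n)·q·(q − 1), where φ is Euler's totient function. -/

import Mathlib

namespace AGLAux

variable {F : Type} [Field F]

/-- The affine permutation `v ↦ a v + b`. -/
def aff (a : Fˣ) (b : F) : Equiv.Perm F where
  toFun v := (a : F) * v + b
  invFun v := ((a⁻¹ : Fˣ) : F) * (v - b)
  left_inv v := by
    simp [Units.inv_mul_cancel_left]
  right_inv v := by
    simp [Units.mul_inv_cancel_left]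

@[simp] lemma aff_apply (a : Fˣ) (b v : F) : aff a b v = (a : F) * v + b := rfl

@[simp] lemma aff_inv_apply (a : Fˣ) (b v : F) :
    (aff a b)⁻¹ v = ((a⁻¹ : Fˣ) : F) * (v - b) := rfl

lemma aff_congr {a a' : Fˣ} {b b' : F} (h1 : a = a') (h2 : b = b') :
    aff a b = aff a' b' := by rw [h1, h2]

lemma aff_mul (a a' : Fˣ) (b b' : F) :
    aff a b * aff a' b' = aff (a * a') ((a : F) * b' + b) := by
  apply Equiv.ext
  intro v
  simp only [Equiv.Perm.mul_apply, aff_apply, Units.val_mul]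
  ring

lemma aff_one : aff (1 : Fˣ) (0 : F) = 1 := by
  apply Equiv.ext
  intro v
  simp

lemma aff_injective {a a' : Fˣ} {b b' : F} (h : aff a b = aff a' b') :
    a = a' ∧ b = b' := by
  have h0 : aff a b 0 = aff a' b' 0 := by rw [h]
  simp only [aff_apply, mul_zero, zero_add] at h0
  have h1 : aff a b 1 = aff a' b' 1 := by rw [h]
  simp only [aff_apply, mul_one] at h1
  have hval : (a : F) = (a' : F) := by rw [h0] at h1; exact add_left_injective _ h1
  exact ⟨Units.ext hval, h0⟩

lemma aff_pow (a : Fˣ) (b : F) (k : ℕ) : ∃ s : F, aff a b ^ k = aff (a ^ k) s := by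
  induction k with
  | zero => exact ⟨0, by rw [pow_zero, pow_zero, aff_one]⟩
  | succ k ih =>
      obtain ⟨s, hs⟩ := ih
      refine ⟨((a ^ k : Fˣ) : F) * b + s, ?_⟩
      rw [pow_succ, hs, aff_mul, pow_succ]

lemma aff_one_mul (s t : F) : aff (1 : Fˣ) s * aff 1 t = aff 1 (t + s) := by
  rw [aff_mul]; simp

lemma aff_one_inv (s : F) : (aff (1 : Fˣ) s)⁻¹ = aff 1 (-s) := by
  symm
  apply eq_inv_of_mul_eq_one_left
  rw [aff_one_mul]
  simp [aff_one]

lemma aff_one_pow (b : F) (k : ℕ) : aff (1 : Fˣ) b ^ k = aff 1 ((k : F) * b) := by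
  induction k with
  | zero => simp [aff_one]
  | succ k ih =>
      rw [pow_succ, ih, aff_one_mul]
      apply aff_congr rfl
      push_cast; ring

lemma val_ne_one {a : Fˣ} (ha : a ≠ 1) : (a : F) ≠ 1 := by
  intro h; exact ha (Units.ext (by simpa using h))

lemma orderOf_aff (a : Fˣ) (b : F) (ha : a ≠ 1) : orderOf (aff a b) = orderOf a := by
  have hne : (1 : F) - (a : F) ≠ 0 := sub_ne_zero.2 (Ne.symm (val_ne_one ha))
  set v0 : F := ((1 : F) - (a : F))⁻¹ * b with hv0
  have hfix : aff a b v0 = v0 := by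
    rw [aff_apply, hv0]
    field_simp
    ring
  have hfixpow : ∀ k : ℕ, (aff a b ^ k) v0 = v0 := by
    intro k
    induction k with
    | zero => simp
    | succ k ih => rw [pow_succ, Equiv.Perm.mul_apply, hfix, ih]
  apply Nat.dvd_antisymm
  · apply orderOf_dvd_of_pow_eq_one
    obtain ⟨s, hs⟩ := aff_pow a b (orderOf a)
    have h1 := hfixpow (orderOf a)
    rw [hs] at h1
    have hs0 : s = 0 := by
      simp only [aff_apply, pow_orderOf_eq_one, Units.val_one, one_mul] at h1
      simpa using h1
    rw [hs, hs0, pow_orderOf_eq_one, aff_one]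
  · apply orderOf_dvd_of_pow_eq_one
    obtain ⟨s, hs⟩ := aff_pow a b (orderOf (aff a b))
    have h1 : aff (a ^ orderOf (aff a b)) s = aff 1 0 := by
      rw [← hs, pow_orderOf_eq_one, aff_one]
    exact (aff_injective h1).1

section Main

variable {p e n : ℕ} [Fintype F] {S : Subgroup Fˣ} {A : Subgroup (Equiv.Perm F)}

lemma neg_one_mem (hp : p.Prime) [CharP F p] (hpar : Odd p → Even n)
    (hS : Nat.card S = n) : (-1 : Fˣ) ∈ S := by
  classical
  rcases hp.eq_two_or_odd' with h2 | hodd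
  · subst h2
    have hneg : (-1 : F) = 1 := by
      have h2 : (2 : F) = 0 := by
        simpa using (CharP.cast_eq_zero F 2)
      linear_combination -h2
    have h1 : (-1 : Fˣ) = 1 := Units.ext (by simpa using hneg)
    rw [h1]; exact one_mem S
  · have hev : Even n := hpar hodd
    haveI : Fintype S := Fintype.ofFinite S
    have hcard : Fintype.card S = n := by rw [← Nat.card_eq_fintype_card, hS]
    have h2 : (2 : ℕ) ∣ Fintype.card S := by rw [hcard]; exact hev.two_dvd
    haveI : Fact (Nat.Prime 2) := ⟨Nat.prime_two⟩
    obtain ⟨u, hu⟩ := exists_prime_orderOf_dvd_card 2 h2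
    have hu2 : ((u : Fˣ) : F) * ((u : Fˣ) : F) = 1 := by
      have hpow : (u : Fˣ) ^ 2 = 1 := by
        rw [← Subgroup.orderOf_coe] at hu
        rw [← hu]; exact pow_orderOf_eq_one _
      have := congrArg (Units.val) hpow
      simpa [pow_two] using this
    rcases mul_self_eq_one_iff.1 hu2 with h1 | hm1
    · exfalso
      have hu1 : u = 1 := by
        have : (u : Fˣ) = 1 := Units.ext (by simpa using h1)
        exact Subtype.ext this
      rw [hu1, orderOf_one] at hu
      omega
    · have : (u : Fˣ) = -1 := Units.ext (by simpa using hm1)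
      rw [← this]; exact u.2

lemma subring_top (hp : p.Prime) [CharP F p] (hq : Fintype.card F = p ^ e)
    (hadm : IsLeast {i : ℕ | 1 ≤ i ∧ p ^ i ≡ 1 [MOD n]} e) (hn1 : 1 < n)
    {a : Fˣ} (han : orderOf a = n) : Subring.closure {(a : F)} = ⊤ := by
  classical
  set E := Subring.closure {(a : F)} with hE
  haveI : Fintype E := Fintype.ofFinite E
  letI : Field E := Fintype.fieldOfDomain E
  obtain ⟨f, -, hcardE⟩ := FiniteField.card E p
  have haE : (a : F) ∈ E := Subring.subset_closure rfl
  have hapow : (a : F) ^ n = 1 := by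
    have : a ^ n = 1 := by rw [← han]; exact pow_orderOf_eq_one a
    have := congrArg (Units.val) this
    simpa using this
  have hinv : (a : F) * (a : F) ^ (n - 1) = 1 := by
    rw [← pow_succ']
    have : n - 1 + 1 = n := by omega
    rw [this, hapow]
  -- the unit of `E` corresponding to `a`
  let u : Eˣ :=
    { val := ⟨(a : F), haE⟩
      inv := ⟨(a : F) ^ (n - 1), Subring.pow_mem E haE _⟩
      val_inv := Subtype.ext (by simpa using hinv)
      inv_val := Subtype.ext (by simpa using (mul_comm ((a : F)) ((a : F) ^ (n - 1)) ▸ hinv)) }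
  have hordu : orderOf u = n := by
    have hinj : Function.Injective (Units.map (E.subtype.toMonoidHom)) :=
      Units.map_injective Subtype.val_injective
    have hmap : Units.map (E.subtype.toMonoidHom) u = a := Units.ext rfl
    rw [← han, ← hmap, orderOf_injective _ hinj u]
  have hdvd : n ∣ Fintype.card Eˣ := by rw [← hordu]; exact orderOf_dvd_card
  have hcardU : Fintype.card Eˣ = p ^ (f : ℕ) - 1 := by
    rw [Fintype.card_units, hcardE]
  have hmod : p ^ (f : ℕ) ≡ 1 [MOD n] := by
    have h1 : 1 ≤ p ^ (f : ℕ) := Nat.one_le_pow _ _ hp.pos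
    exact ((Nat.modEq_iff_dvd' h1).2 (by rw [← hcardU]; exact hdvd)).symm
  have hef : e ≤ (f : ℕ) := hadm.2 ⟨f.2, hmod⟩
  have hfe : (f : ℕ) ≤ e := by
    have hle : Fintype.card E ≤ Fintype.card F :=
      Fintype.card_le_of_injective _ Subtype.val_injective
    rw [hcardE, hq] at hle
    exact (Nat.pow_le_pow_iff_right hp.one_lt).1 hle
  have hcards : Fintype.card E = Fintype.card F := by
    rw [hcardE, hq]
    congr 1
    omega
  have hbij : Function.Bijective (E.subtype) :=
    (Fintype.bijective_iff_injective_and_card _).2 ⟨Subtype.val_injective, hcards⟩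
  rw [Subring.eq_top_iff']
  intro x
  obtain ⟨y, hy⟩ := hbij.2 x
  rw [← hy]
  exact y.2

lemma closure_ne (hA : ∀ g : Equiv.Perm F,
      g ∈ A ↔ ∃ a ∈ S, ∃ b : F, ∀ v : F, g v = (a : F) * v + b)
    (a : Fˣ) (b c : F) (ha1 : a ≠ 1) (hd : ((a : F) - 1) * c + 2 * b = 0) :
    Subgroup.closure {aff a b, aff (-1) c} ≠ A := by
  have hne : (1 : F) - (a : F) ≠ 0 := sub_ne_zero.2 (Ne.symm (val_ne_one ha1))
  set v0 : F := ((1 : F) - (a : F))⁻¹ * b with hv0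
  have hx0 : aff a b v0 = v0 := by
    rw [aff_apply, hv0]; field_simp; ring
  have hy0 : aff (-1 : Fˣ) c v0 = v0 := by
    rw [aff_apply, hv0]
    have hc : c = 2 * (((1 : F) - (a : F))⁻¹ * b) := by
      field_simp
      linear_combination -hd
    rw [hc]
    simp only [Units.val_neg, Units.val_one]
    ring
  intro hEq
  have hle : Subgroup.closure {aff a b, aff (-1 : Fˣ) c} ≤
      MulAction.stabilizer (Equiv.Perm F) v0 := by
    rw [Subgroup.closure_le]
    intro z hz
    simp only [Set.mem_insert_iff, Set.mem_singleton_iff] at hz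
    rcases hz with rfl | rfl
    · exact hx0
    · exact hy0
  have htr : aff (1 : Fˣ) (1 : F) ∈ A :=
    (hA _).2 ⟨1, one_mem S, 1, fun v => rfl⟩
  rw [← hEq] at htr
  have := hle htr
  have h1 : aff (1 : Fˣ) (1 : F) v0 = v0 := this
  simp only [aff_apply, Units.val_one, one_mul] at h1
  have h0 : (1 : F) = 0 := by simpa using h1
  exact one_ne_zero h0

lemma closure_eq (hp : p.Prime) [CharP F p] (hq : Fintype.card F = p ^ e)
    (hS : Nat.card S = n)
    (hadm : IsLeast {i : ℕ | 1 ≤ i ∧ p ^ i ≡ 1 [MOD n]} e) (hn1 : 1 < n)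
    (hA : ∀ g : Equiv.Perm F,
      g ∈ A ↔ ∃ a ∈ S, ∃ b : F, ∀ v : F, g v = (a : F) * v + b)
    {a : Fˣ} {b c : F} (haS : a ∈ S) (han : orderOf a = n)
    (hneg : (-1 : Fˣ) ∈ S)
    (hd : ((a : F) - 1) * c + 2 * b ≠ 0) :
    Subgroup.closure {aff a b, aff (-1) c} = A := by
  have ha0 : (a : F) ≠ 0 := Units.ne_zero a
  set H := Subgroup.closure {aff a b, aff (-1 : Fˣ) c} with hH
  apply le_antisymm
  · rw [hH, Subgroup.closure_le]
    intro z hz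
    simp only [Set.mem_insert_iff, Set.mem_singleton_iff] at hz
    rcases hz with rfl | rfl
    · exact (hA _).2 ⟨a, haS, b, fun v => rfl⟩
    · exact (hA _).2 ⟨-1, hneg, c, fun v => rfl⟩
  · have hx : aff a b ∈ H := Subgroup.subset_closure (by simp)
    have hy : aff (-1 : Fˣ) c ∈ H := Subgroup.subset_closure (by simp)
    -- the basic commutator is a translation by `d`
    have hd1 : aff (1 : Fˣ) (((a : F) - 1) * c + 2 * b) =
        aff a b * aff (-1 : Fˣ) c * (aff a b)⁻¹ * aff (-1 : Fˣ) c := by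
      apply Equiv.ext
      intro v
      simp only [Equiv.Perm.mul_apply, aff_apply, aff_inv_apply,
        Units.val_inv_eq_inv_val, Units.val_neg, Units.val_one]
      field_simp
      ring
    have hdH : aff (1 : Fˣ) (((a : F) - 1) * c + 2 * b) ∈ H := by
      rw [hd1]
      exact mul_mem (mul_mem (mul_mem hx hy) (inv_mem hx)) hy
    -- conjugation by x multiplies translations by a
    have htr : ∀ s : F, aff (1 : Fˣ) s ∈ H → aff (1 : Fˣ) ((a : F) * s) ∈ H := by
      intro s hs
      have heq : aff (1 : Fˣ) ((a : F) * s) = aff a b * aff (1 : Fˣ) s * (aff a b)⁻¹ := by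
        apply Equiv.ext
        intro v
        simp only [Equiv.Perm.mul_apply, aff_apply, aff_inv_apply,
          Units.val_inv_eq_inv_val, Units.val_one]
        field_simp
        ring
      rw [heq]
      exact mul_mem (mul_mem hx hs) (inv_mem hx)
    -- all subring-closure multiples
    have hscl : ∀ r ∈ Subring.closure {(a : F)},
        ∀ s : F, aff (1 : Fˣ) s ∈ H → aff (1 : Fˣ) (r * s) ∈ H := by
      intro r hr
      induction hr using Subring.closure_induction with
      | mem z hz =>
          intro s hs
          rw [Set.mem_singleton_iff] at hz
          rw [hz]
          exact htr s hs
      | zero =>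
          intro s _
          rw [zero_mul, aff_one]
          exact one_mem H
      | one =>
          intro s hs
          rw [one_mul]
          exact hs
      | add z w hz hw ihz ihw =>
          intro s hs
          have h := mul_mem (ihz s hs) (ihw s hs)
          rw [aff_one_mul] at h
          rwa [show (z + w) * s = w * s + z * s by ring]
      | neg z hz ihz =>
          intro s hs
          have h := inv_mem (ihz s hs)
          rw [aff_one_inv] at h
          rwa [show (-z) * s = -(z * s) by ring]
      | mul z w hz hw ihz ihw =>
          intro s hs
          have h := ihz (w * s) (ihw s hs)
          rwa [← mul_assoc] at h
    -- all translations are in H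
    have htrans : ∀ s : F, aff (1 : Fˣ) s ∈ H := by
      intro s
      set d : F := ((a : F) - 1) * c + 2 * b with hdd
      have h1 : aff (1 : Fˣ) ((s * d⁻¹) * d) ∈ H := by
        apply hscl
        · rw [subring_top hp hq hadm hn1 han]; trivial
        · exact hdH
      rwa [mul_assoc, inv_mul_cancel₀ hd, mul_one] at h1
    -- conclude
    intro g hg
    obtain ⟨a', ha'S, b', hgv⟩ := (hA g).1 hg
    have hg' : g = aff a' b' := Equiv.ext hgv
    have hzp : Subgroup.zpowers a = S := by
      haveI : Finite S := inferInstance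
      apply Subgroup.eq_of_le_of_card_ge (Subgroup.zpowers_le.2 haS)
      rw [hS, Nat.card_zpowers, han]
    have ha'mem : a' ∈ Subgroup.zpowers a := by rw [hzp]; exact ha'S
    have ha'pow : a' ∈ Submonoid.powers a := mem_powers_iff_mem_zpowers.2 ha'mem
    obtain ⟨k, hk⟩ := (Submonoid.mem_powers_iff _ _).1 ha'pow
    obtain ⟨s, hsk⟩ := aff_pow a b k
    have hgd : g = aff (1 : Fˣ) (b' - s) * (aff a b) ^ k := by
      rw [hsk, hg', aff_mul]
      apply aff_congr
      · rw [one_mul, hk]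
      · simp
    rw [hgd]
    exact mul_mem (htrans _) (pow_mem hx k)

end Main

end AGLAux

open AGLAux

/-- Let `p` be prime, `e ≥ 1`, `q = p^e`, `F` a finite field with `q`
elements, `n` a divisor of `q - 1` (even if `p` is odd), and `S` the subgroup of order
`n` of `Fˣ`.  Assume `(q, n)` is admissible and `n > 1`, and let `A = AGL₁⁽ⁿ⁾(q)` be
the subgroup of `Perm F` of affine maps `v ↦ a v + b` with `a ∈ S`, `b ∈ F`.  Then the
number of ordered pairs `(x, y)` of elements of `A` with `x` of order `n`, `y` of order
`2`, and `⟨x, y⟩ = A`, is `φ(n)·q·(q - 1)`. -/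
theorem card_generating_pairs_AGL
    (p e n : ℕ) (hp : p.Prime) (he : 1 ≤ e)
    (F : Type) [Field F] [Fintype F] (hq : Fintype.card F = p ^ e)
    (hn : n ∣ p ^ e - 1) (hpar : Odd p → Even n)
    (S : Subgroup Fˣ) (hS : Nat.card S = n)
    (hadm : IsLeast {i : ℕ | 1 ≤ i ∧ p ^ i ≡ 1 [MOD n]} e)
    (hn1 : 1 < n)
    (A : Subgroup (Equiv.Perm F))
    (hA : ∀ g : Equiv.Perm F,
      g ∈ A ↔ ∃ a ∈ S, ∃ b : F, ∀ v : F, g v = (a : F) * v + b) :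
    Nat.card {xy : Equiv.Perm F × Equiv.Perm F //
        xy.1 ∈ A ∧ xy.2 ∈ A ∧ orderOf xy.1 = n ∧ orderOf xy.2 = 2 ∧
        Subgroup.closure ({xy.1, xy.2} : Set (Equiv.Perm F)) = A} =
      Nat.totient n * p ^ e * (p ^ e - 1) := by
  classical
  haveI hfp : Fact p.Prime := ⟨hp⟩
  -- establish the characteristic
  obtain ⟨p', hp'⟩ := CharP.exists F
  haveI := hp'
  have hp'prime : p'.Prime := CharP.char_is_prime F p'
  obtain ⟨m, -, hm⟩ := FiniteField.card F p'
  have hpp' : p = p' := by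
    have hd : p ∣ p' ^ (m : ℕ) := by
      rw [← hm, hq]
      exact dvd_pow_self p (by omega)
    exact (Nat.prime_dvd_prime_iff_eq hp hp'prime).1 (hp.dvd_of_dvd_pow hd)
  subst hpp'
  -- basic facts
  have hnegS : (-1 : Fˣ) ∈ S := neg_one_mem hp hpar hS
  have hppow : ¬ p ∣ p ^ e - 1 := by
    intro hdvd
    have h1 : p ∣ p ^ e := dvd_pow_self p (by omega)
    have h2 := Nat.dvd_sub h1 hdvd
    rw [Nat.sub_sub_self (Nat.one_le_pow _ _ hp.pos)] at h2
    exact hp.one_lt.ne' (Nat.dvd_one.1 h2)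
  -- the parameter space
  let Gen := {a : Fˣ // a ∈ S ∧ orderOf a = n}
  let U := {u : F // u ≠ 0}
  -- Φ : parameters → pairs
  have key : ∀ a : Fˣ, orderOf a = n → (a : F) - 1 ≠ 0 := by
    intro a han
    have ha1 : a ≠ 1 := by
      rintro rfl
      rw [orderOf_one] at han
      omega
    exact sub_ne_zero.2 (val_ne_one ha1)
  let cOf : Fˣ → F → F → F := fun a b u => ((a : F) - 1)⁻¹ * (u - 2 * b)
  have hdOf : ∀ (a : Fˣ), orderOf a = n → ∀ (b u : F),
      ((a : F) - 1) * (cOf a b u) + 2 * b = u := by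
    intro a han b u
    have := key a han
    dsimp only [cOf]
    rw [← mul_assoc, mul_inv_cancel₀ this, one_mul]
    ring
  let Pairs := {xy : Equiv.Perm F × Equiv.Perm F //
      xy.1 ∈ A ∧ xy.2 ∈ A ∧ orderOf xy.1 = n ∧ orderOf xy.2 = 2 ∧
      Subgroup.closure ({xy.1, xy.2} : Set (Equiv.Perm F)) = A}
  have conditions : ∀ (a : Fˣ) (b c : F), a ∈ S → orderOf a = n →
      ((a : F) - 1) * c + 2 * b ≠ 0 →
      aff a b ∈ A ∧ aff (-1 : Fˣ) c ∈ A ∧ orderOf (aff a b) = n ∧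
        orderOf (aff (-1 : Fˣ) c) = 2 ∧
        Subgroup.closure ({aff a b, aff (-1 : Fˣ) c} : Set (Equiv.Perm F)) = A := by
    intro a b c haS han hd
    have ha1 : a ≠ 1 := by
      rintro rfl
      rw [orderOf_one] at han
      omega
    refine ⟨(hA _).2 ⟨a, haS, b, fun v => rfl⟩, (hA _).2 ⟨-1, hnegS, c, fun v => rfl⟩,
      ?_, ?_, closure_eq hp hq hS hadm hn1 hA haS han hnegS hd⟩
    · rw [orderOf_aff a b ha1, han]
    · haveI : Fact (Nat.Prime 2) := ⟨Nat.prime_two⟩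
      apply orderOf_eq_prime
      · rw [pow_two, aff_mul, ← aff_one]
        apply aff_congr
        · simp
        · simp
      · intro hy1
        have h := aff_injective (hy1.trans aff_one.symm)
        have hc0 : c = 0 := h.2
        have hneg1 : ((-1 : Fˣ) : F) = 1 := by rw [h.1]; simp
        have h2 : (2 : F) = 0 := by
          have : (-1 : F) = 1 := by simpa using hneg1
          linear_combination -this
        apply hd
        rw [hc0, h2]
        ring
  let Φ : Gen × F × U → Pairs := fun t =>
    ⟨(aff t.1.1 t.2.1, aff (-1 : Fˣ) (cOf t.1.1 t.2.1 t.2.2.1)), by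
      obtain ⟨⟨a, haS, han⟩, b, u, hu⟩ := t
      have hd : ((a : F) - 1) * (cOf a b u) + 2 * b ≠ 0 := by
        rw [hdOf a han b u]; exact hu
      exact conditions a b _ haS han hd⟩
  have hinj : Function.Injective Φ := by
    rintro ⟨⟨a, haS, han⟩, b, u, hu⟩ ⟨⟨a', ha'S, ha'n⟩, b', u', hu'⟩ hEq
    have hEq' := congrArg (fun z => z.1) hEq
    have h1 : aff a b = aff a' b' := congrArg (fun z => z.1) hEq'
    have h2 : aff (-1 : Fˣ) (cOf a b u) = aff (-1 : Fˣ) (cOf a' b' u') :=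
      congrArg (fun z => z.2) hEq'
    obtain ⟨hab, hbb⟩ := aff_injective h1
    have hcc : cOf a b u = cOf a' b' u' := (aff_injective h2).2
    have huu : u = u' := by
      have e1 := hdOf a han b u
      have e2 := hdOf a' ha'n b' u'
      rw [← e1, ← e2, hcc, hab, hbb]
    apply Prod.ext
    · exact Subtype.ext hab
    · exact Prod.ext hbb (Subtype.ext huu)
  have hsurj : Function.Surjective Φ := by
    rintro ⟨⟨x, y⟩, hxA, hyA, hxo, hyo, hgen⟩
    obtain ⟨a, haS, b, hxv⟩ := (hA x).1 hxA
    have hx : x = aff a b := Equiv.ext hxv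
    obtain ⟨a', ha'S, c, hyv⟩ := (hA y).1 hyA
    have hy' : y = aff a' c := Equiv.ext hyv
    -- a ≠ 1
    have ha1 : a ≠ 1 := by
      rintro rfl
      have hxp : x ^ p = 1 := by
        rw [hx, aff_one_pow]
        rw [CharP.cast_eq_zero F p, zero_mul, aff_one]
      have hnp : n ∣ p := by rw [← hxo]; exact orderOf_dvd_of_pow_eq_one hxp
      rcases (Nat.Prime.eq_one_or_self_of_dvd hp n hnp) with h | h
      · omega
      · exact hppow (h ▸ hn)
    have han : orderOf a = n := by
      rw [← hxo, hx, orderOf_aff a b ha1]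
    -- a' = -1
    have hysq : y ^ 2 = 1 := by rw [← hyo]; exact pow_orderOf_eq_one y
    have h2 : aff (a' * a') ((a' : F) * c + c) = aff 1 0 := by
      rw [← aff_mul, aff_one, ← hy', ← pow_two]
      exact hysq
    obtain ⟨haa, hcc⟩ := aff_injective h2
    have hval : (a' : F) * (a' : F) = 1 := by
      rw [← Units.val_mul, haa, Units.val_one]
    have ha'neg : a' = -1 := by
      rcases mul_self_eq_one_iff.1 hval with hone | hmone
      · have ha'1 : a' = 1 := Units.ext (by simpa using hone)
        have hc2 : c + c = 0 := by
          rw [ha'1] at hcc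
          simpa using hcc
        have hc0 : c ≠ 0 := by
          rintro rfl
          have hy1 : y = 1 := by rw [hy', ha'1]; exact aff_one
          rw [hy1, orderOf_one] at hyo
          omega
        have h2z : (2 : F) = 0 := by
          have h2c : (2 : F) * c = 0 := by linear_combination hc2
          rcases mul_eq_zero.1 h2c with h | h
          · exact h
          · exact absurd h hc0
        apply Units.ext
        rw [ha'1]
        simp only [Units.val_one, Units.val_neg]
        linear_combination h2z
      · exact Units.ext (by simpa using hmone)
    have hyc : y = aff (-1 : Fˣ) c := by rw [hy', ha'neg]
    -- d ≠ 0
    have hd : ((a : F) - 1) * c + 2 * b ≠ 0 := by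
      intro h0
      apply closure_ne hA a b c ha1 h0
      rw [← hx, ← hyc]
      exact hgen
    refine ⟨⟨⟨a, haS, han⟩, b, ⟨((a : F) - 1) * c + 2 * b, hd⟩⟩, ?_⟩
    apply Subtype.ext
    simp only [Φ]
    apply Prod.ext
    · exact hx.symm
    · rw [hyc]
      apply aff_congr rfl
      have hane := key a han
      dsimp only [cOf]
      rw [add_sub_cancel_right, ← mul_assoc, inv_mul_cancel₀ hane, one_mul]
  have hcard := Nat.card_eq_of_bijective Φ ⟨hinj, hsurj⟩
  rw [← hcard]
  -- compute the cardinality of the parameter space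
  rw [Nat.card_prod, Nat.card_prod]
  have hGen : Nat.card Gen = Nat.totient n := by
    haveI : Fintype S := Fintype.ofFinite S
    have hcardS : Fintype.card S = n := by rw [← Nat.card_eq_fintype_card, hS]
    have e1 : Gen ≃ {u : S // orderOf u = n} :=
      { toFun := fun x => ⟨⟨x.1, x.2.1⟩, by rw [Subgroup.orderOf_mk]; exact x.2.2⟩
        invFun := fun u => ⟨u.1.1, u.1.2, by rw [Subgroup.orderOf_coe]; exact u.2⟩
        left_inv := fun x => rfl
        right_inv := fun u => rfl }
    rw [Nat.card_congr e1, Nat.card_eq_fintype_card, Fintype.card_subtype]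
    exact IsCyclic.card_orderOf_eq_totient (by rw [hcardS])
  have hF : Nat.card F = p ^ e := by rw [Nat.card_eq_fintype_card, hq]
  have hU : Nat.card U = p ^ e - 1 := by
    have e2 : U ≃ Fˣ := (unitsEquivNeZero (G₀ := F)).symm
    rw [Nat.card_congr e2, Nat.card_eq_fintype_card, Fintype.card_units, hq]
  rw [hGen, hF, hU, mul_assoc]
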